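/- Let F be a field, m ≥ 5, and for i ∈ [m] (indices mod m) let A_i = {2i-1, 2i} ⊆ ZMod m with m even, so the sets A_i for i ∈ [m/2] are pairwise disjoint intervals of length 2 covering ZMod m. Let E ≤ F^m be a subspace such that for each user i there exist d_i ∉ A_i and v_i ∈ E with supp(v_i) ⊆ A_i ∪ {d_i} and (v_i)_{d_i} ≠ 0, and the privacy condition holds: for each i and each j ∉ A_i ∪ {d_i} no vector of E has support in A_i ∪ {j} with nonzero j-th coordinate. Then e_t ∉ E for all t ∈ [m]. -/
import Mathlib


/-- Proposition 3 (case g = s = 2): side information sets `A i = {2i-1, 2i}`; in a valid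
linear private code no standard basis vector lies in the code span. -/
theorem stmt_10 (F : Type*) [Field F] (m : ℕ) (hm : 5 ≤ m) (hme : Even m)
    (A : Fin (m / 2) → Set (ZMod m))
    (hA : ∀ i, A i = {((2 * i.val + 1 : ℕ) : ZMod m), ((2 * i.val + 2 : ℕ) : ZMod m)})
    (E : Submodule F (ZMod m → F)) (d : Fin (m / 2) → ZMod m)
    (hdec : ∀ i, d i ∉ A i ∧ ∃ v ∈ E, v (d i) ≠ 0 ∧ ∀ j, v j ≠ 0 → j ∈ A i ∪ {d i})
    (hpriv : ∀ i, ∀ j ∉ A i ∪ {d i},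
      ¬ ∃ v ∈ E, v j ≠ 0 ∧ ∀ t, v t ≠ 0 → t ∈ A i ∪ {j}) :
    ∀ t : ZMod m, Pi.single t (1 : F) ∉ E := by
  intro t ht
  haveI : NeZero m := ⟨by omega⟩
  have hm0 : m % 2 = 0 := Nat.even_iff.mp hme
  have hm2 : m / 2 * 2 = m := by omega
  -- every element of ZMod m lies in some A i
  have cover : ∀ x : ZMod m, ∃ i : Fin (m / 2), x ∈ A i := by
    intro x
    have hxv : x.val < m := ZMod.val_lt x
    have hx : ((x.val : ℕ) : ZMod m) = x := ZMod.natCast_rightInverse x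
    rcases Nat.eq_zero_or_pos x.val with h0 | hpos
    · refine ⟨⟨m / 2 - 1, by omega⟩, ?_⟩
      rw [hA, Set.mem_insert_iff, Set.mem_singleton_iff]
      right
      have h1 : 2 * (m / 2 - 1) + 2 = m := by omega
      rw [show ((2 * (m / 2 - 1) + 2 : ℕ) : ZMod m) = ((m : ℕ) : ZMod m) by rw [h1]]
      rw [ZMod.natCast_self, ← hx, h0, Nat.cast_zero]
    · rcases Nat.even_or_odd x.val with he | ho
      · have he2 : x.val % 2 = 0 := Nat.even_iff.mp he
        refine ⟨⟨x.val / 2 - 1, by omega⟩, ?_⟩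
        rw [hA, Set.mem_insert_iff, Set.mem_singleton_iff]
        right
        have h1 : 2 * (x.val / 2 - 1) + 2 = x.val := by omega
        rw [show (2 * ((⟨x.val / 2 - 1, by omega⟩ : Fin (m / 2)).val) + 2 : ℕ)
            = x.val by simpa using h1, hx]
      · have ho2 : x.val % 2 = 1 := Nat.odd_iff.mp ho
        refine ⟨⟨x.val / 2, by omega⟩, ?_⟩
        rw [hA, Set.mem_insert_iff, Set.mem_singleton_iff]
        left
        have h1 : 2 * (x.val / 2) + 1 = x.val := by omega
        rw [show (2 * ((⟨x.val / 2, by omega⟩ : Fin (m / 2)).val) + 1 : ℕ)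
            = x.val by simpa using h1, hx]
  -- the value of any element of A i determines i
  have keyval : ∀ (i : Fin (m / 2)) (x : ZMod m), x ∈ A i →
      x.val = 2 * i.val + 1 ∨ x.val = 2 * i.val + 2 ∨ (x.val = 0 ∧ 2 * i.val + 2 = m) := by
    intro i x hx
    have hi := i.isLt
    rw [hA, Set.mem_insert_iff, Set.mem_singleton_iff] at hx
    rcases hx with h | h
    · left
      rw [h, ZMod.val_cast_of_lt (by omega)]
    · rcases lt_or_eq_of_le (show 2 * i.val + 2 ≤ m by omega) with hlt | heq
      · right; left
        rw [h, ZMod.val_cast_of_lt hlt]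
      · right; right
        refine ⟨?_, heq⟩
        rw [h, show ((2 * i.val + 2 : ℕ) : ZMod m) = ((m : ℕ) : ZMod m) by rw [heq],
          ZMod.natCast_self, ZMod.val_zero]
  have uniq : ∀ (i : Fin (m / 2)) (x : ZMod m), x ∈ A i → ∀ k, x ∈ A k → i = k := by
    intro i x hxi k hxk
    have h1 := keyval i x hxi
    have h2 := keyval k x hxk
    have hi := i.isLt
    have hk := k.isLt
    apply Fin.ext
    omega
  -- the two elements of a pair are distinct
  have hne : ∀ i : Fin (m / 2), ((2 * i.val + 1 : ℕ) : ZMod m) ≠ ((2 * i.val + 2 : ℕ) : ZMod m) := by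
    intro i h
    have hi := i.isLt
    have h1 : ((2 * i.val + 1 : ℕ) : ZMod m).val = 2 * i.val + 1 :=
      ZMod.val_cast_of_lt (by omega)
    rcases lt_or_eq_of_le (show 2 * i.val + 2 ≤ m by omega) with hlt | heq
    · have h2 : ((2 * i.val + 2 : ℕ) : ZMod m).val = 2 * i.val + 2 :=
        ZMod.val_cast_of_lt hlt
      rw [h] at h1
      omega
    · have h2 : ((2 * i.val + 2 : ℕ) : ZMod m).val = 0 := by
        rw [show ((2 * i.val + 2 : ℕ) : ZMod m) = ((m : ℕ) : ZMod m) by rw [heq],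
          ZMod.natCast_self, ZMod.val_zero]
      rw [h] at h1
      omega
  -- Step 1: every user whose side-information set misses t must have demand t
  obtain ⟨i, hti⟩ := cover t
  have step1 : ∀ k, t ∉ A k → d k = t := by
    intro k htk
    by_contra hdk
    refine hpriv k t ?_ ⟨Pi.single t 1, ht, by simp, ?_⟩
    · intro h
      rw [Set.mem_union, Set.mem_singleton_iff] at h
      rcases h with h | h
      · exact htk h
      · exact hdk h.symm
    · intro s hs
      have hst : s = t := by
        by_contra hst
        rw [Pi.single_eq_of_ne hst] at hs
        exact hs rfl
      rw [Set.mem_union, Set.mem_singleton_iff]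
      right; exact hst
  obtain ⟨hdi, v, hvE, hvd, hvsupp⟩ := hdec i
  obtain ⟨k, hdk⟩ := cover (d i)
  have hki : k ≠ i := fun h => hdi (h ▸ hdk)
  have htk : t ∉ A k := fun h => hki (uniq k t h i hti)
  have hdkt : d k = t := step1 k htk
  have hdit : d i ≠ t := fun h => hdi (h ▸ hti)
  -- write A i = {t, a}
  obtain ⟨a, hta, hAi2⟩ : ∃ a, t ≠ a ∧ A i = {t, a} := by
    have hti' := hti
    rw [hA, Set.mem_insert_iff, Set.mem_singleton_iff] at hti'
    rcases hti' with h | h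
    · exact ⟨_, by rw [h]; exact hne i, by rw [hA, h]⟩
    · exact ⟨_, by rw [h]; exact (hne i).symm, by rw [hA, h, Set.pair_comm]⟩
  have hai : a ∈ A i := by rw [hAi2]; exact Set.mem_insert_of_mem _ rfl
  -- the auxiliary vector u
  set u : ZMod m → F := v - v t • (Pi.single t 1 : ZMod m → F) with hu
  have huE : u ∈ E := E.sub_mem hvE (E.smul_mem _ ht)
  have hut : u t = 0 := by simp [hu]
  have hud : u (d i) = v (d i) := by
    simp [hu, Pi.single_eq_of_ne hdit]
  have husupp : ∀ s, u s ≠ 0 → s = a ∨ s = d i := by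
    intro s hs
    have hst : s ≠ t := by
      intro h
      rw [h, hut] at hs
      exact hs rfl
    have hvs : v s ≠ 0 := by
      intro h
      apply hs
      simp [hu, h, Pi.single_eq_of_ne hst]
    have hmem := hvsupp s hvs
    rw [hAi2, Set.mem_union, Set.mem_insert_iff, Set.mem_singleton_iff,
      Set.mem_singleton_iff] at hmem
    rcases hmem with (h | h) | h
    · exact absurd h hst
    · exact Or.inl h
    · exact Or.inr h
  by_cases hua : u a = 0
  · -- u is supported on {d i}; use a third user
    obtain ⟨k', hk'i, hk'k⟩ : ∃ k' : Fin (m / 2), k' ≠ i ∧ k' ≠ k := by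
      by_contra hc
      push_neg at hc
      have hsub : (Finset.univ : Finset (Fin (m / 2))) ⊆ {i, k} := by
        intro x _
        rw [Finset.mem_insert, Finset.mem_singleton]
        rcases eq_or_ne x i with h | h
        · exact Or.inl h
        · exact Or.inr (hc x h)
      have hcard := Finset.card_le_card hsub
      rw [Finset.card_univ, Fintype.card_fin] at hcard
      have h2 : ({i, k} : Finset (Fin (m / 2))).card ≤ 2 := by
        refine le_trans (Finset.card_insert_le _ _) ?_
        rw [Finset.card_singleton]
      omega
    have htk' : t ∉ A k' := fun h => hk'i (uniq k' t h i hti)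
    have hdk't : d k' = t := step1 k' htk'
    have hdnotin : d i ∉ A k' := fun h => hk'k (uniq k' (d i) h k hdk)
    refine hpriv k' (d i) ?_ ⟨u, huE, by rw [hud]; exact hvd, ?_⟩
    · intro h
      rw [Set.mem_union, Set.mem_singleton_iff] at h
      rcases h with h | h
      · exact hdnotin h
      · rw [hdk't] at h
        exact hdit h
    · intro s hs
      rcases husupp s hs with h | h
      · exact absurd (h ▸ hs) (by rw [hua]; exact fun h' => h' rfl)
      · rw [Set.mem_union, Set.mem_singleton_iff]
        right; exact h
  · -- u is nonzero at a; privacy of user k is violated with j = a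
    have hak : a ∉ A k := fun h => hki (uniq k a h i hai)
    refine hpriv k a ?_ ⟨u, huE, hua, ?_⟩
    · intro h
      rw [Set.mem_union, Set.mem_singleton_iff] at h
      rcases h with h | h
      · exact hak h
      · rw [hdkt] at h
        exact hta h.symm
    · intro s hs
      rcases husupp s hs with h | h
      · rw [Set.mem_union, Set.mem_singleton_iff]
        right; exact h
      · rw [Set.mem_union]
        left; rw [h]; exact hdk
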